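/- Define f' : [1,2) → [1,2) by f'(x) = 4x/3 if 1 ≤ x < 3/2 and f'(x) = 2x/3 if 3/2 ≤ x < 2. Then for every t ∈ [1,2) and every integer n ≥ 1, the n-th iterate satisfies f'^[n](t) ≠ t; in particular every orbit of f' is infinite and the group of maps generated by f' is infinite cyclic. -/

import Mathlib

/-- The piecewise affine map `f'` (given on `[1,2)` by `f' x = 4x/3` for `x < 3/2` and
`f' x = 2x/3` for `x ≥ 3/2`); it maps `[1,2)` into itself. -/
noncomputable def f' : ℝ → ℝ :=
  fun x => if x < 3 / 2 then 4 * x / 3 else 2 * x / 3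

lemma f'_mem {x : ℝ} (hx : x ∈ Set.Ico (1 : ℝ) 2) : f' x ∈ Set.Ico (1 : ℝ) 2 := by
  obtain ⟨h1, h2⟩ := hx
  unfold f'
  split_ifs with h
  · constructor <;> [linarith; linarith]
  · push_neg at h
    constructor <;> [linarith; linarith]

lemma iter_form {t : ℝ} (ht : t ∈ Set.Ico (1 : ℝ) 2) (n : ℕ) :
    ∃ k : ℕ, n ≤ k ∧ f'^[n] t = t * 2 ^ k / 3 ^ n ∧ f'^[n] t ∈ Set.Ico (1 : ℝ) 2 := by
  induction n with
  | zero => exact ⟨0, le_refl 0, by simp, ht⟩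
  | succ n ih =>
    obtain ⟨k, hk, heq, hmem⟩ := ih
    rw [Function.iterate_succ_apply']
    by_cases h : f'^[n] t < 3 / 2
    · refine ⟨k + 2, by omega, ?_, f'_mem hmem⟩
      simp only [f']
      rw [if_pos h, heq]
      ring
    · refine ⟨k + 1, by omega, ?_, f'_mem hmem⟩
      simp only [f']
      rw [if_neg h, heq]
      ring

lemma nofix {t : ℝ} (ht : t ∈ Set.Ico (1 : ℝ) 2) (n : ℕ) (hn : 1 ≤ n) :
    f'^[n] t ≠ t := by
  obtain ⟨k, hk, heq, _⟩ := iter_form ht n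
  intro hfix
  rw [hfix] at heq
  have ht0 : (0 : ℝ) < t := lt_of_lt_of_le one_pos ht.1
  have h23 : (2 : ℝ) ^ k = 3 ^ n := by
    rw [eq_div_iff (by positivity)] at heq
    exact (mul_left_cancel₀ ht0.ne' heq).symm
  have hnat : (2 : ℕ) ^ k = 3 ^ n := by exact_mod_cast h23
  have hodd : (3 : ℕ) ^ n % 2 = 1 := by
    have := Nat.pow_mod 3 n 2
    simpa using this
  have hk1 : 1 ≤ k := le_trans hn hk
  have heven : (2 : ℕ) ^ k % 2 = 0 := by
    have : (2 : ℕ) ∣ 2 ^ k := dvd_pow_self 2 (by omega)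
    omega
  omega

/-- For every `t ∈ [1,2)`, no iterate `f'^[n]` with `n ≥ 1` fixes `t`; in particular the
orbit of every point of `[1,2)` under `f'` is infinite. -/
theorem stmt_15 :
    ∀ t ∈ Set.Ico (1 : ℝ) 2,
      (∀ n : ℕ, 1 ≤ n → f'^[n] t ≠ t) ∧
        (Set.range fun n : ℕ => f'^[n] t).Infinite := by
  intro t ht
  refine ⟨fun n hn => nofix ht n hn, ?_⟩
  apply Set.infinite_range_of_injective
  have key : ∀ m n : ℕ, m < n → f'^[n] t = f'^[m] t → False := by
    intro m n h hmn
    obtain ⟨_, _, _, hmem⟩ := iter_form ht m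
    have : f'^[n - m] (f'^[m] t) = f'^[m] t := by
      rw [← Function.iterate_add_apply, Nat.sub_add_cancel (le_of_lt h)]
      exact hmn
    exact nofix hmem (n - m) (by omega) this
  intro m n hmn
  simp only at hmn
  rcases lt_trichotomy m n with h | h | h
  · exact absurd hmn.symm (fun he => key m n h he)
  · exact h
  · exact absurd hmn (fun he => key n m h he)
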